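/- For a function h on ℝ⁴∖{0} homogeneous of degree d ≠ −2, the operator (deg+2)⁻¹ defined by (deg+2)⁻¹h = h/(d+2) satisfies (deg+2)∘(deg+2)⁻¹ h = h; moreover the operator identity 2(deg+2) = ∇(Z·) + Z⁺∇⁺(·) holds: for any C¹ quaternion-valued function f, ∇(Z·f) + Z⁺·∇⁺f = 2(deg f + 2f), where deg = ∑ᵢ zⁱ∂ᵢ, Z = z⁰e₀+…+z³e₃, Z⁺ its conjugate, and products are quaternionic. -/

import Mathlib

noncomputable section

/-- The real quaternions. -/
abbrev Hq := Quaternion ℝ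

/-- The quaternionic units `e₀ = 1, e₁, e₂, e₃`. -/
def qe : Fin 4 → Hq := ![1, ⟨0,1,0,0⟩, ⟨0,0,1,0⟩, ⟨0,0,0,1⟩]

/-- Partial derivative `∂/∂zⁱ` of a quaternion-valued function on ℝ⁴. -/
def pdq (i : Fin 4) (f : (Fin 4 → ℝ) → Hq) : (Fin 4 → ℝ) → Hq :=
  fun x => fderiv ℝ f x (Pi.single i 1)

/-- `∇ = e₀∂₀ − e₁∂₁ − e₂∂₂ − e₃∂₃`. -/
def DMinus (f : (Fin 4 → ℝ) → Hq) : (Fin 4 → ℝ) → Hq :=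
  fun x => pdq 0 f x - qe 1 * pdq 1 f x - qe 2 * pdq 2 f x - qe 3 * pdq 3 f x

/-- The four-dimensional Laplacian `□ = ∑ᵢ ∂ᵢ²`. -/
def lapq (f : (Fin 4 → ℝ) → Hq) : (Fin 4 → ℝ) → Hq :=
  fun x => ∑ i : Fin 4, pdq i (pdq i f) x

/-- The quaternion `Z = z⁰e₀ + z¹e₁ + z²e₂ + z³e₃` attached to a point of ℝ⁴;
its quaternionic conjugate `Z⁺` is `star (Zq x)`. -/
def Zq (x : Fin 4 → ℝ) : Hq := ∑ i : Fin 4, x i • qe i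

/-- `∇⁺ = e₀∂₀ + e₁∂₁ + e₂∂₂ + e₃∂₃`. -/
def DPlus (f : (Fin 4 → ℝ) → Hq) : (Fin 4 → ℝ) → Hq :=
  fun x => ∑ i : Fin 4, qe i * pdq i f x

/-- The Euler degree operator `deg = ∑ᵢ zⁱ∂ᵢ` on quaternion-valued functions. -/
def degq (f : (Fin 4 → ℝ) → Hq) : (Fin 4 → ℝ) → Hq :=
  fun x => ∑ i : Fin 4, x i • pdq i f x


/-- Z as a continuous linear map. -/
def ZqL : (Fin 4 → ℝ) →L[ℝ] Hq :=
  ∑ i : Fin 4, (ContinuousLinearMap.proj i).smulRight (qe i)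

lemma ZqL_apply (x : Fin 4 → ℝ) : ZqL x = Zq x := by
  simp [ZqL, Zq, ContinuousLinearMap.sum_apply]

lemma hasFDerivAt_Zq (x : Fin 4 → ℝ) : HasFDerivAt Zq ZqL x := by
  have : Zq = ⇑ZqL := by funext y; rw [ZqL_apply]
  rw [this]; exact ZqL.hasFDerivAt

lemma ZqL_single (i : Fin 4) : ZqL (Pi.single i 1) = qe i := by
  rw [ZqL_apply]
  simp [Zq, Pi.single_apply, Fin.sum_univ_four]

lemma pdq_Zq_mul (f : (Fin 4 → ℝ) → Hq) (hf : ContDiff ℝ 1 f) (i : Fin 4) (x : Fin 4 → ℝ) :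
    pdq i (fun y => Zq y * f y) x = qe i * f x + Zq x * pdq i f x := by
  have hfd : HasFDerivAt f (fderiv ℝ f x) x :=
    (hf.differentiable one_ne_zero x).hasFDerivAt
  have h := (hasFDerivAt_Zq x).mul' hfd
  unfold pdq
  rw [show (fun y => Zq y * f y) = Zq * f from rfl, h.fderiv]
  simp [ZqL_single, smul_eq_mul]
  exact add_comm _ _

lemma degq_eq_fderiv (h : (Fin 4 → ℝ) → Hq) (x : Fin 4 → ℝ) :
    degq h x = fderiv ℝ h x x := by
  have hx : x = ∑ i : Fin 4, x i • (Pi.single i 1 : Fin 4 → ℝ) := by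
    funext j
    simp [Finset.sum_apply, Pi.single_apply]
  calc degq h x = ∑ i : Fin 4, fderiv ℝ h x (x i • (Pi.single i 1 : Fin 4 → ℝ)) := by
        simp only [degq, pdq, map_smul]
    _ = fderiv ℝ h x (∑ i : Fin 4, x i • (Pi.single i 1 : Fin 4 → ℝ)) := by
        rw [map_sum]
    _ = fderiv ℝ h x x := by rw [← hx]

lemma euler (d : ℝ) (h : (Fin 4 → ℝ) → Hq) (hh : ContDiffOn ℝ 1 h {x | x ≠ 0})
    (hom : ∀ t : ℝ, 0 < t → ∀ x : Fin 4 → ℝ, h (t • x) = (t ^ d) • h x)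
    (x : Fin 4 → ℝ) (hx : x ≠ 0) :
    degq h x = d • h x ∧ DifferentiableAt ℝ h x := by
  have hopen : IsOpen {y : Fin 4 → ℝ | y ≠ 0} := isOpen_compl_singleton
  have hdiff : DifferentiableAt ℝ h x :=
    ((hh.differentiableOn one_ne_zero) x hx).differentiableAt (hopen.mem_nhds hx)
  have hφ : HasDerivAt (fun t : ℝ => t • x) x 1 := by
    simpa using (hasDerivAt_id (1:ℝ)).smul_const x
  have hcomp : HasDerivAt (fun t : ℝ => h (t • x)) (fderiv ℝ h x x) 1 := by
    have h1 : HasFDerivAt h (fderiv ℝ h x) ((1:ℝ) • x) := by simpa using hdiff.hasFDerivAt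
    exact h1.comp_hasDerivAt 1 hφ
  have hrpow : HasDerivAt (fun t : ℝ => (t ^ d) • h x) (d • h x) 1 := by
    have := (Real.hasDerivAt_rpow_const (p := d) (x := 1) (Or.inl one_ne_zero)).smul_const (h x)
    simpa using this
  have heq : (fun t : ℝ => h (t • x)) =ᶠ[nhds 1] (fun t : ℝ => (t ^ d) • h x) := by
    filter_upwards [isOpen_Ioi.mem_nhds (by norm_num : (1:ℝ) ∈ Set.Ioi 0)] with t ht
    exact hom t ht x
  have hcomp' : HasDerivAt (fun t : ℝ => (t ^ d) • h x) (fderiv ℝ h x x) 1 :=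
    hcomp.congr_of_eventuallyEq heq.symm
  rw [degq_eq_fderiv]
  exact ⟨hrpow.unique hcomp' ▸ rfl, hdiff⟩

/-- (a) for a C¹ function `h` on ℝ⁴∖{0}, homogeneous of degree
`d ≠ −2`, the operator `(deg+2)⁻¹ h = h/(d+2)` is a right inverse of `deg + 2`;
(b) the operator identity `2(deg+2) = ∇(Z·) + Z⁺∇⁺(·)`: for every C¹ quaternionic
function `f`, `∇(Zf) + Z⁺∇⁺f = 2(deg f + 2f)`. -/
theorem deg_plus_two_inverse_and_factorization :
    (∀ (d : ℝ), d ≠ -2 → ∀ h : (Fin 4 → ℝ) → Hq,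
      ContDiffOn ℝ 1 h {x | x ≠ 0} →
      (∀ t : ℝ, 0 < t → ∀ x : Fin 4 → ℝ, h (t • x) = (t ^ d) • h x) →
      ∀ x : Fin 4 → ℝ, x ≠ 0 →
        degq (fun y => (d + 2)⁻¹ • h y) x + (2 : ℝ) • ((d + 2)⁻¹ • h x) = h x) ∧
    (∀ f : (Fin 4 → ℝ) → Hq, ContDiff ℝ 1 f → ∀ x : Fin 4 → ℝ,
      DMinus (fun y => Zq y * f y) x + star (Zq x) * DPlus f x
        = (2 : ℝ) • (degq f x + (2 : ℝ) • f x)) := by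
  constructor
  · intro d hd h hh hom x hx
    obtain ⟨heuler, hdiff⟩ := euler d h hh hom x hx
    have hsmul : ∀ i : Fin 4, pdq i (fun y => (d + 2)⁻¹ • h y) x = (d + 2)⁻¹ • pdq i h x := by
      intro i
      simp only [pdq, fderiv_fun_const_smul hdiff]
      rfl
    have hdeg : degq (fun y => (d + 2)⁻¹ • h y) x = (d + 2)⁻¹ • degq h x := by
      simp only [degq, hsmul, Finset.smul_sum]
      exact Finset.sum_congr rfl fun i _ => smul_comm _ _ _
    rw [hdeg, heuler]
    have hne : d + 2 ≠ 0 := fun hc => hd (by linarith)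
    rw [smul_smul, smul_smul, ← add_smul]
    rw [show (d+2)⁻¹ * d + 2 * (d+2)⁻¹ = 1 by field_simp, one_smul]
  · intro f hf x
    unfold DMinus DPlus degq
    rw [pdq_Zq_mul f hf 0 x, pdq_Zq_mul f hf 1 x, pdq_Zq_mul f hf 2 x, pdq_Zq_mul f hf 3 x]
    set a := f x
    set p0 := pdq 0 f x
    set p1 := pdq 1 f x
    set p2 := pdq 2 f x
    set p3 := pdq 3 f x
    have q0 : qe 0 = 1 := rfl
    have q1 : (qe 1).re = 0 ∧ (qe 1).imI = 1 ∧ (qe 1).imJ = 0 ∧ (qe 1).imK = 0 := ⟨rfl, rfl, rfl, rfl⟩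
    have q2 : (qe 2).re = 0 ∧ (qe 2).imI = 0 ∧ (qe 2).imJ = 1 ∧ (qe 2).imK = 0 := ⟨rfl, rfl, rfl, rfl⟩
    have q3 : (qe 3).re = 0 ∧ (qe 3).imI = 0 ∧ (qe 3).imJ = 0 ∧ (qe 3).imK = 1 := ⟨rfl, rfl, rfl, rfl⟩
    simp only [Zq, q0, Fin.sum_univ_four, Matrix.cons_val_zero, Matrix.cons_val_one,
      Matrix.head_cons, Matrix.cons_val_two, Matrix.tail_cons, Matrix.cons_val_three]
    ext <;>
      simp [Quaternion.ext_iff, Quaternion.re_mul, Quaternion.imI_mul, Quaternion.imJ_mul,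
        Quaternion.imK_mul, Quaternion.re_one, Quaternion.imI_one, Quaternion.imJ_one,
        Quaternion.imK_one, a, p0, p1, p2, p3, q1, q2, q3] <;> ring
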